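/- Let {Xᵢ}_{i∈I} be a cofiltered system of spectral spaces whose transition maps are surjective, quasi-compact and closed, and let X = lim Xᵢ. Then the Krull dimension of X equals the supremum of the Krull dimensions of the Xᵢ. -/

import Mathlib

open Set Topology TopologicalSpace

/-- Key lemma: if `x` is in the image of every member of a downward-directed family of
closed sets under a closed quasi-compact map (target with compact open basis), then
`x` is in the image of the intersection. -/
lemma key_lemma' {Y Z : Type*} [TopologicalSpace Y] [TopologicalSpace Z]
    {g : Y → Z} (hgcl : IsClosedMap g)
    (hgqc : ∀ U : Set Z, IsOpen U → IsCompact U → IsCompact (g ⁻¹' U))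
    (hZbase : ∀ (x : Z) (U : Set Z), IsOpen U → x ∈ U →
      ∃ V : Set Z, IsOpen V ∧ IsCompact V ∧ x ∈ V ∧ V ⊆ U)
    {x : Z} {D : Set (Set Y)} (hne : D.Nonempty)
    (hdir : DirectedOn (fun A B => B ⊆ A) D)
    (hcl : ∀ A ∈ D, IsClosed A) (hx : ∀ A ∈ D, x ∈ g '' A) :
    x ∈ g '' ⋂₀ D := by
  by_contra hcon
  have hTcl : IsClosed (⋂₀ D) := isClosed_sInter hcl
  have hEcl : IsClosed (g '' ⋂₀ D) := hgcl _ hTcl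
  obtain ⟨V, hVo, hVc, hxV, hVE⟩ := hZbase x (g '' ⋂₀ D)ᶜ hEcl.isOpen_compl (by simpa using hcon)
  have hK : IsCompact (g ⁻¹' V) := hgqc V hVo hVc
  haveI : CompactSpace (g ⁻¹' V) := isCompact_iff_compactSpace.mp hK
  haveI : Nonempty D := hne.to_subtype
  have key : (⋂ A : D, (Subtype.val ⁻¹' (A : Set Y) : Set (g ⁻¹' V))).Nonempty := by
    apply IsCompact.nonempty_iInter_of_directed_nonempty_isCompact_isClosed
    · rintro ⟨A, hA⟩ ⟨B, hB⟩
      obtain ⟨C, hC, hCA, hCB⟩ := hdir A hA B hB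
      exact ⟨⟨C, hC⟩, fun z hz => hCA hz, fun z hz => hCB hz⟩
    · rintro ⟨A, hA⟩
      obtain ⟨a, haA, hax⟩ := hx A hA
      exact ⟨⟨a, by simp [Set.mem_preimage, hax, hxV]⟩, haA⟩
    · rintro ⟨A, hA⟩
      exact ((hcl A hA).preimage continuous_subtype_val).isCompact
    · rintro ⟨A, hA⟩
      exact (hcl A hA).preimage continuous_subtype_val
  obtain ⟨⟨z, hzV⟩, hz⟩ := key
  have hzD : z ∈ ⋂₀ D := by
    intro A hA
    simpa using Set.mem_iInter.mp hz ⟨A, hA⟩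
  exact hVE hzV ⟨z, hzD, rfl⟩


section

variable {ι : Type*} [Preorder ι] [IsDirected ι (· ≤ ·)]
    {X : ι → Type*} [∀ i, TopologicalSpace (X i)]
    [∀ i, CompactSpace (X i)] [∀ i, QuasiSober (X i)] [∀ i, T0Space (X i)]
    {f : ∀ ⦃i j : ι⦄, i ≤ j → X j → X i}

/-- image of closure of a singleton under a continuous closed map -/
lemma closed_image_closure_singleton {Y Z : Type*} [TopologicalSpace Y] [TopologicalSpace Z]
    {g : Y → Z} (hc : Continuous g) (hcl : IsClosedMap g) (a : Y) :
    g '' closure {a} = closure {g a} := by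
  apply Set.Subset.antisymm
  · have := image_closure_subset_closure_image (s := ({a} : Set Y)) hc
    simpa using this
  · apply closure_minimal _ (hcl _ isClosed_closure)
    simp only [Set.singleton_subset_iff]
    exact ⟨a, subset_closure rfl, rfl⟩

lemma exists_thread_bot
    (hbase : ∀ i (x : X i) (U : Set (X i)), IsOpen U → x ∈ U →
      ∃ V : Set (X i), IsOpen V ∧ IsCompact V ∧ x ∈ V ∧ V ⊆ U)
    (hcont : ∀ ⦃i j : ι⦄ (h : i ≤ j), Continuous (f h))
    (hid : ∀ (i : ι) (x : X i), f (le_refl i) x = x)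
    (hcomp : ∀ ⦃i j k : ι⦄ (hij : i ≤ j) (hjk : j ≤ k) (x : X k),
      f hij (f hjk x) = f (hij.trans hjk) x)
    (hqc : ∀ ⦃i j : ι⦄ (h : i ≤ j) (U : Set (X i)), IsOpen U → IsCompact U →
      IsCompact (f h ⁻¹' U))
    (hclosed : ∀ ⦃i j : ι⦄ (h : i ≤ j), IsClosedMap (f h))
    (i : ι) (hi : ∀ j, i ≤ j)
    (B : ∀ j, Set (X j)) (hBcl : ∀ j, IsClosed (B j))
    (hBstab : ∀ ⦃j k : ι⦄ (h : j ≤ k), f h '' B k ⊆ B j)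
    (y : X i) (hy : ∀ j, y ∈ f (hi j) '' B j) :
    ∃ u : ∀ j, X j, (∀ ⦃j k : ι⦄ (h : j ≤ k), f h (u k) = u j) ∧ u i = y ∧ ∀ j, u j ∈ B j := by
  classical
  -- the collection of closed stable subsystems through `y`
  set S : Set (∀ j, Set (X j)) :=
    {A | (∀ j, IsClosed (A j)) ∧ (∀ ⦃j k : ι⦄ (h : j ≤ k), f h '' A k ⊆ A j) ∧
      (∀ j, y ∈ f (hi j) '' A j) ∧ (∀ j, A j ⊆ B j) ∧ A i ⊆ closure {y}} with hS
  -- the starting subsystem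
  have hA0 : (fun j => B j ∩ f (hi j) ⁻¹' closure {y}) ∈ S := by
    refine ⟨fun j => (hBcl j).inter (isClosed_closure.preimage (hcont _)), ?_, ?_, ?_, ?_⟩
    · rintro j k h a ⟨b, hb, rfl⟩
      refine ⟨hBstab h ⟨b, hb.1, rfl⟩, ?_⟩
      have : f (hi j) (f h b) = f (hi k) b := hcomp (hi j) h b
      simp only [mem_preimage, this]
      exact hb.2
    · intro j
      obtain ⟨b, hb, hbe⟩ := hy j
      exact ⟨b, ⟨hb, by rw [mem_preimage, hbe]; exact subset_closure rfl⟩, hbe⟩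
    · intro j
      exact inter_subset_left
    · intro a ha
      have := ha.2
      rwa [mem_preimage, hid i a] at this
  -- Zorn: a minimal element of S
  obtain ⟨A, hAS, hAmin⟩ : ∃ A ∈ S, ∀ A' ∈ S, (∀ j, A' j ⊆ A j) → ∀ j, A j ⊆ A' j := by
    have hbound : ∀ c ⊆ OrderDual.toDual '' S, IsChain (· ≤ ·) c →
        ∃ ub ∈ OrderDual.toDual '' S, ∀ z ∈ c, z ≤ ub := by
      rintro c hcS hchain
      rcases c.eq_empty_or_nonempty with rfl | ⟨A₁, hA₁⟩
      · exact ⟨OrderDual.toDual _, ⟨_, hA0, rfl⟩, fun z hz => absurd hz (notMem_empty z)⟩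
      -- intersection of the chain
      refine ⟨OrderDual.toDual (fun j => ⋂ a ∈ c, (OrderDual.ofDual a) j), ⟨_, ?_, rfl⟩,
        fun A hA j => biInter_subset_of_mem hA⟩
      have hmem : ∀ a ∈ c, OrderDual.ofDual a ∈ S := by
        intro a ha
        obtain ⟨A, hA, rfl⟩ := hcS ha
        exact hA
      refine ⟨?_, ?_, ?_, ?_, ?_⟩
      · exact fun j => isClosed_biInter fun a ha => (hmem a ha).1 j
      · rintro j k h z ⟨b, hb, rfl⟩
        exact mem_iInter₂.mpr fun a ha =>
          (hmem a ha).2.1 h ⟨b, mem_iInter₂.mp hb a ha, rfl⟩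
      · intro j
        have hkey : y ∈ f (hi j) ''
            ⋂₀ (((fun a : ((j : ι) → Set (X j))ᵒᵈ => (OrderDual.ofDual a) j) '' c :
                Set (Set (X j)))) := by
          apply key_lemma' (hclosed (hi j)) (hqc (hi j)) (hbase i)
          · exact ⟨_, ⟨A₁, hA₁, rfl⟩⟩
          · rintro _ ⟨a, ha, rfl⟩ _ ⟨b, hb, rfl⟩
            rcases hchain.total ha hb with hab | hab
            · exact ⟨_, ⟨b, hb, rfl⟩, hab j, le_refl _⟩
            · exact ⟨_, ⟨a, ha, rfl⟩, le_refl _, hab j⟩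
          · rintro _ ⟨a, ha, rfl⟩
            exact (hmem a ha).1 j
          · rintro _ ⟨a, ha, rfl⟩
            exact (hmem a ha).2.2.1 j
        rw [sInter_image] at hkey
        exact hkey
      · exact fun j => (biInter_subset_of_mem hA₁).trans ((hmem A₁ hA₁).2.2.2.1 j)
      · exact (biInter_subset_of_mem hA₁).trans (hmem A₁ hA₁).2.2.2.2
    obtain ⟨m, hm⟩ := zorn_le₀ (OrderDual.toDual '' S) hbound
    refine ⟨OrderDual.ofDual m, ?_, ?_⟩
    · obtain ⟨A, hA, hAm⟩ := hm.1
      rw [← hAm]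
      exact hA
    · intro A' hA' hle j
      have := hm.2 (y := OrderDual.toDual A') ⟨A', hA', rfl⟩ (fun j => hle j)
      exact this j
  obtain ⟨hAcl, hAstab, hAy, hAB, hAi⟩ := hAS
  -- (P1): transition maps are surjective on the minimal subsystem
  have hP1 : ∀ ⦃j k : ι⦄ (h : j ≤ k), A j ⊆ f h '' A k := by
    set A' : ∀ j, Set (X j) := fun j => ⋂ (k) (h : j ≤ k), f h '' A k with hA'
    have hA'A : ∀ j, A' j ⊆ A j := by
      intro j z hz
      have := mem_iInter.mp (mem_iInter.mp hz j) (le_refl j)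
      obtain ⟨a, ha, hae⟩ := this
      have : a = z := by rw [← hae]; exact (hid j a).symm
      exact this ▸ ha
    have hA'S : A' ∈ S := by
      refine ⟨?_, ?_, ?_, fun j => (hA'A j).trans (hAB j), (hA'A i).trans hAi⟩
      · exact fun j => isClosed_iInter fun k => isClosed_iInter fun h => hclosed h _ (hAcl k)
      · rintro j j' h z ⟨b, hb, rfl⟩
        refine mem_iInter.mpr fun k => mem_iInter.mpr fun hk => ?_
        obtain ⟨m, hm1, hm2⟩ := directed_of (· ≤ ·) k j'
        obtain ⟨a, ha, rfl⟩ := mem_iInter.mp (mem_iInter.mp hb m) hm2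
        have : f h (f hm2 a) = f hk (f hm1 a) := by rw [hcomp h hm2 a, hcomp hk hm1 a]
        rw [this]
        exact ⟨f hm1 a, hAstab hm1 ⟨a, ha, rfl⟩, rfl⟩
      · intro j
        have hkey : y ∈ f (hi j) ''
            ⋂₀ {T : Set (X j) | ∃ k, ∃ h : j ≤ k, T = f h '' A k} := by
          apply key_lemma' (hclosed (hi j)) (hqc (hi j)) (hbase i)
          · exact ⟨_, j, le_refl j, rfl⟩
          · rintro _ ⟨k1, h1, rfl⟩ _ ⟨k2, h2, rfl⟩
            obtain ⟨m, hm1, hm2⟩ := directed_of (· ≤ ·) k1 k2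
            refine ⟨f (h1.trans hm1) '' A m, ⟨m, h1.trans hm1, rfl⟩, ?_, ?_⟩
            · rintro _ ⟨a, ha, rfl⟩
              exact ⟨f hm1 a, hAstab hm1 ⟨a, ha, rfl⟩, (hcomp h1 hm1 a)⟩
            · rintro _ ⟨a, ha, rfl⟩
              exact ⟨f hm2 a, hAstab hm2 ⟨a, ha, rfl⟩, (hcomp h2 hm2 a)⟩
          · rintro _ ⟨k, h, rfl⟩
            exact (hclosed h) _ (hAcl k)
          · rintro _ ⟨k, h, rfl⟩
            obtain ⟨a, ha, hae⟩ := hAy k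
            exact ⟨f h a, ⟨a, ha, rfl⟩, by rw [hcomp (hi j) h a]; exact hae⟩
        obtain ⟨z, hz, hze⟩ := hkey
        refine ⟨z, ?_, hze⟩
        exact mem_iInter.mpr fun k => mem_iInter.mpr fun h => hz _ ⟨k, h, rfl⟩
    have hAA' := hAmin A' hA'S hA'A
    intro j k h z hz
    exact mem_iInter.mp (mem_iInter.mp (hAA' j hz) k) h
  -- (P2): each member of the minimal subsystem is irreducible
  have hP2 : ∀ j, IsIrreducible (A j) := by
    intro j0
    obtain ⟨a0, ha0, ha0e⟩ := hAy j0
    have claim : ∀ Z : Set (X j0), IsClosed Z → y ∈ f (hi j0) '' (A j0 ∩ Z) → A j0 ⊆ Z := by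
      intro Z hZ hyZ
      set A'' : ∀ j, Set (X j) := fun j =>
        ⋂ (k) (h1 : j ≤ k) (h2 : j0 ≤ k), f h1 '' (A k ∩ f h2 ⁻¹' Z) with hA''def
      have hA''A : ∀ j, A'' j ⊆ A j := by
        intro j z hz
        obtain ⟨m, hm1, hm2⟩ := directed_of (· ≤ ·) j j0
        obtain ⟨a, ha, rfl⟩ := mem_iInter.mp (mem_iInter.mp (mem_iInter.mp hz m) hm1) hm2
        exact hAstab hm1 ⟨a, ha.1, rfl⟩
      have hA''S : A'' ∈ S := by
        refine ⟨?_, ?_, ?_, fun j => (hA''A j).trans (hAB j), (hA''A i).trans hAi⟩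
        · refine fun j => isClosed_iInter fun k => isClosed_iInter fun h1 =>
            isClosed_iInter fun h2 => (hclosed h1) _ ((hAcl k).inter (hZ.preimage (hcont h2)))
        · rintro j j' h z ⟨b, hb, rfl⟩
          refine mem_iInter.mpr fun k => mem_iInter.mpr fun hk1 => mem_iInter.mpr fun hk2 => ?_
          obtain ⟨m, hm1, hm2⟩ := directed_of (· ≤ ·) k j'
          obtain ⟨a, ha, rfl⟩ :=
            mem_iInter.mp (mem_iInter.mp (mem_iInter.mp hb m) hm2) (hk2.trans hm1)
          have : f h (f hm2 a) = f hk1 (f hm1 a) := by rw [hcomp h hm2 a, hcomp hk1 hm1 a]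
          rw [this]
          refine ⟨f hm1 a, ⟨hAstab hm1 ⟨a, ha.1, rfl⟩, ?_⟩, rfl⟩
          show f hk2 (f hm1 a) ∈ Z
          rw [hcomp hk2 hm1 a]
          exact ha.2
        · intro j
          have hkey : y ∈ f (hi j) '' ⋂₀ {T : Set (X j) |
              ∃ k, ∃ h1 : j ≤ k, ∃ h2 : j0 ≤ k, T = f h1 '' (A k ∩ f h2 ⁻¹' Z)} := by
            apply key_lemma' (hclosed (hi j)) (hqc (hi j)) (hbase i)
            · obtain ⟨m, hm1, hm2⟩ := directed_of (· ≤ ·) j j0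
              exact ⟨_, m, hm1, hm2, rfl⟩
            · rintro _ ⟨k1, h1, h1', rfl⟩ _ ⟨k2, h2, h2', rfl⟩
              obtain ⟨m, hm1, hm2⟩ := directed_of (· ≤ ·) k1 k2
              refine ⟨f (h1.trans hm1) '' (A m ∩ f (h1'.trans hm1) ⁻¹' Z),
                ⟨m, h1.trans hm1, h1'.trans hm1, rfl⟩, ?_, ?_⟩
              · rintro _ ⟨a, ha, rfl⟩
                refine ⟨f hm1 a, ⟨hAstab hm1 ⟨a, ha.1, rfl⟩, ?_⟩, (hcomp h1 hm1 a)⟩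
                show f h1' (f hm1 a) ∈ Z
                rw [hcomp h1' hm1 a]
                exact ha.2
              · rintro _ ⟨a, ha, rfl⟩
                refine ⟨f hm2 a, ⟨hAstab hm2 ⟨a, ha.1, rfl⟩, ?_⟩, (hcomp h2 hm2 a)⟩
                show f h2' (f hm2 a) ∈ Z
                rw [hcomp h2' hm2 a]
                exact ha.2
            · rintro _ ⟨k, h1, h2, rfl⟩
              exact (hclosed h1) _ ((hAcl k).inter (hZ.preimage (hcont h2)))
            · rintro _ ⟨k, h1, h2, rfl⟩
              obtain ⟨c, hc, hce⟩ := hyZ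
              obtain ⟨b, hb, hbe⟩ := hP1 h2 hc.1
              refine ⟨f h1 b, ⟨b, ⟨hb, ?_⟩, rfl⟩, ?_⟩
              · show f h2 b ∈ Z
                rw [hbe]
                exact hc.2
              · rw [hcomp (hi j) h1 b, ← hcomp (hi j0) h2 b, hbe]
                exact hce
          obtain ⟨z, hz, hze⟩ := hkey
          refine ⟨z, ?_, hze⟩
          exact mem_iInter.mpr fun k => mem_iInter.mpr fun h1 => mem_iInter.mpr fun h2 =>
            hz _ ⟨k, h1, h2, rfl⟩
      have hmin := hAmin A'' hA''S hA''A
      intro z hz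
      obtain ⟨a, ha, hae⟩ :=
        mem_iInter.mp (mem_iInter.mp (mem_iInter.mp (hmin j0 hz) j0) (le_refl j0)) (le_refl j0)
      have haz : a = z := by rw [← hae]; exact (hid j0 a).symm
      have : f (le_refl j0) a ∈ Z := ha.2
      rw [hid j0 a] at this
      exact haz ▸ this
    constructor
    · exact ⟨a0, ha0⟩
    · rw [isPreirreducible_iff_isClosed_union_isClosed]
      intro Z1 Z2 hZ1 hZ2 hsub
      rcases hsub ha0 with h1 | h2
      · exact Or.inl (claim Z1 hZ1 ⟨a0, ⟨ha0, h1⟩, ha0e⟩)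
      · exact Or.inr (claim Z2 hZ2 ⟨a0, ⟨ha0, h2⟩, ha0e⟩)
  -- generic points give the thread
  choose ξ hξ using fun j => QuasiSober.sober (hP2 j) (hAcl j)
  have hthread : ∀ ⦃j k : ι⦄ (h : j ≤ k), f h (ξ k) = ξ j := by
    intro j k h
    have h1 : f h '' A k = A j := subset_antisymm (hAstab h) (hP1 h)
    have h2 : IsGenericPoint (f h (ξ k)) (A j) := by
      show closure {f h (ξ k)} = A j
      rw [← closed_image_closure_singleton (hcont h) (hclosed h) (ξ k), (hξ k).def, h1]
    exact h2.eq (hξ j)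
  have hyA : y ∈ A i := by
    obtain ⟨a, ha, hae⟩ := hAy i
    have : a = y := by rw [← hae]; exact (hid i a).symm
    exact this ▸ ha
  have hgy : IsGenericPoint y (A i) :=
    subset_antisymm (closure_minimal (singleton_subset_iff.mpr hyA) (hAcl i)) hAi
  have hξi : ξ i = y := (hξ i).eq hgy
  exact ⟨ξ, hthread, hξi, fun j => hAB j (hξ j).mem⟩


lemma exists_thread [Nonempty ι]
    (hbase : ∀ i (x : X i) (U : Set (X i)), IsOpen U → x ∈ U →
      ∃ V : Set (X i), IsOpen V ∧ IsCompact V ∧ x ∈ V ∧ V ⊆ U)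
    (hcont : ∀ ⦃i j : ι⦄ (h : i ≤ j), Continuous (f h))
    (hid : ∀ (i : ι) (x : X i), f (le_refl i) x = x)
    (hcomp : ∀ ⦃i j k : ι⦄ (hij : i ≤ j) (hjk : j ≤ k) (x : X k),
      f hij (f hjk x) = f (hij.trans hjk) x)
    (hqc : ∀ ⦃i j : ι⦄ (h : i ≤ j) (U : Set (X i)), IsOpen U → IsCompact U →
      IsCompact (f h ⁻¹' U))
    (hclosed : ∀ ⦃i j : ι⦄ (h : i ≤ j), IsClosedMap (f h))
    (i : ι)
    (B : ∀ j, Set (X j)) (hBcl : ∀ j, IsClosed (B j))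
    (hBstab : ∀ ⦃j k : ι⦄ (h : j ≤ k), f h '' B k ⊆ B j)
    (y : X i) (hy : ∀ j (h : i ≤ j), y ∈ f h '' B j) :
    ∃ u : ∀ j, X j, (∀ ⦃j k : ι⦄ (h : j ≤ k), f h (u k) = u j) ∧ u i = y ∧ ∀ j, u j ∈ B j := by
  classical
  -- restrict to the upper set of `i`
  let ι' := {j : ι // i ≤ j}
  haveI : IsDirected ι' (· ≤ ·) := ⟨by
    rintro ⟨a, ha⟩ ⟨b, hb⟩
    obtain ⟨m, hm1, hm2⟩ := directed_of (· ≤ ·) a b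
    exact ⟨⟨m, ha.trans hm1⟩, hm1, hm2⟩⟩
  let X' : ι' → Type _ := fun j => X j.1
  let f' : ∀ ⦃j k : ι'⦄, j ≤ k → X' k → X' j := fun j k h x => f (h : j.1 ≤ k.1) x
  obtain ⟨ξ, hξthread, hξi, hξB⟩ :=
    exists_thread_bot (X := X') (f := f')
      (fun j x U hU hx => hbase j.1 x U hU hx)
      (fun j k h => hcont h)
      (fun j x => hid j.1 x)
      (fun j k l hjk hkl x => hcomp hjk hkl x)
      (fun j k h U hU hUc => hqc h U hU hUc)
      (fun j k h => hclosed h)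
      (⟨i, le_refl i⟩ : ι') (fun j => j.2)
      (fun j => B j.1) (fun j => hBcl j.1) (fun j k h => hBstab h)
      y (fun j => hy j.1 j.2)
  -- extend the thread over the upper set to the whole index set
  have hub : ∀ j : ι, ∃ m : ι', j ≤ m.1 := by
    intro j
    obtain ⟨m, hm1, hm2⟩ := directed_of (· ≤ ·) i j
    exact ⟨⟨m, hm1⟩, hm2⟩
  choose m hm using hub
  -- independence of the choice
  have haux : ∀ (j : ι) (a b : ι') (hja : j ≤ a.1) (hjb : j ≤ b.1),
      f hja (ξ a) = f hjb (ξ b) := by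
    intro j a b hja hjb
    obtain ⟨p, hp1, hp2⟩ := directed_of (· ≤ ·) a.1 b.1
    let p' : ι' := ⟨p, a.2.trans hp1⟩
    have h1 : f' (show a ≤ p' from hp1) (ξ p') = ξ a := hξthread (show a ≤ p' from hp1)
    have h2 : f' (show b ≤ p' from hp2) (ξ p') = ξ b := hξthread (show b ≤ p' from hp2)
    rw [← h1, ← h2]
    show f hja (f hp1 (ξ p')) = f hjb (f hp2 (ξ p'))
    rw [hcomp hja hp1 (ξ p'), hcomp hjb hp2 (ξ p')]
  refine ⟨fun j => f (hm j) (ξ (m j)), ?_, ?_, ?_⟩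
  · intro j k h
    have : f h (f (hm k) (ξ (m k))) = f (h.trans (hm k)) (ξ (m k)) := hcomp h (hm k) (ξ (m k))
    rw [this]
    exact haux j (m k) (m j) (h.trans (hm k)) (hm j)
  · refine (haux i (m i) ⟨i, le_refl i⟩ (hm i) (le_refl i)).trans ?_
    rw [hid]
    exact hξi
  · intro j
    exact hBstab (hm j) ⟨ξ (m j), hξB (m j), rfl⟩


lemma lift_chain [Nonempty ι]
    (hbase : ∀ i (x : X i) (U : Set (X i)), IsOpen U → x ∈ U →
      ∃ V : Set (X i), IsOpen V ∧ IsCompact V ∧ x ∈ V ∧ V ⊆ U)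
    (hcont : ∀ ⦃i j : ι⦄ (h : i ≤ j), Continuous (f h))
    (hid : ∀ (i : ι) (x : X i), f (le_refl i) x = x)
    (hcomp : ∀ ⦃i j k : ι⦄ (hij : i ≤ j) (hjk : j ≤ k) (x : X k),
      f hij (f hjk x) = f (hij.trans hjk) x)
    (hqc : ∀ ⦃i j : ι⦄ (h : i ≤ j) (U : Set (X i)), IsOpen U → IsCompact U →
      IsCompact (f h ⁻¹' U))
    (hclosed : ∀ ⦃i j : ι⦄ (h : i ≤ j), IsClosedMap (f h))
    (hsurj : ∀ ⦃i j : ι⦄ (h : i ≤ j), Function.Surjective (f h))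
    (i : ι) :
    ∀ (n : ℕ) (η : Fin (n+1) → X i),
      (∀ k : Fin n, η k.castSucc ∈ closure {η k.succ}) →
      ∃ v : Fin (n+1) → {u : ∀ j, X j // ∀ ⦃j k : ι⦄ (h : j ≤ k), f h (u k) = u j},
        (∀ k, (v k).1 i = η k) ∧
        (∀ (k : Fin n) (j : ι), (v k.castSucc).1 j ∈ closure {(v k.succ).1 j}) := by
  intro n
  induction n with
  | zero =>
    intro η _
    obtain ⟨u, hu, hui, -⟩ :=
      exists_thread hbase hcont hid hcomp hqc hclosed i (fun j => (univ : Set (X j)))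
        (fun j => isClosed_univ) (fun j k h => subset_univ _) (η 0)
        (fun j h => by obtain ⟨a, ha⟩ := hsurj h (η 0); exact ⟨a, mem_univ a, ha⟩)
    exact ⟨fun _ => ⟨u, hu⟩, fun k => by
      have hk : k = 0 := Fin.ext (by omega)
      rw [hk]; exact hui, fun k => k.elim0⟩
  | succ n IH =>
    intro η hchain
    obtain ⟨v', hv'i, hv'link⟩ := IH (fun k => η k.succ) (by
      intro k
      have := hchain k.succ
      show η k.castSucc.succ ∈ closure {η k.succ.succ}
      rw [Fin.succ_castSucc]
      exact this)
    have hB : ∀ (j : ι), IsClosed (closure {(v' 0).1 j}) := fun j => isClosed_closure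
    obtain ⟨u, hu, hui, huB⟩ :=
      exists_thread hbase hcont hid hcomp hqc hclosed i
        (fun j => closure {(v' 0).1 j}) hB
        (by
          intro j k h
          rw [closed_image_closure_singleton (hcont h) (hclosed h), (v' 0).2 h])
        (η 0)
        (by
          intro j h
          rw [closed_image_closure_singleton (hcont h) (hclosed h), (v' 0).2 h, hv'i 0]
          have := hchain 0
          rwa [Fin.castSucc_zero] at this)
    refine ⟨Fin.cases ⟨u, hu⟩ v', ?_, ?_⟩
    · intro k
      induction k using Fin.cases with
      | zero => simpa using hui
      | succ a => simpa using hv'i a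
    · intro k j
      induction k using Fin.cases with
      | zero =>
        rw [Fin.castSucc_zero]
        simp only [Fin.cases_zero, Fin.cases_succ]
        exact huB j
      | succ a =>
        rw [← Fin.succ_castSucc]
        simpa using hv'link a j


lemma dim_ge [Nonempty ι]
    (hbase : ∀ i (x : X i) (U : Set (X i)), IsOpen U → x ∈ U →
      ∃ V : Set (X i), IsOpen V ∧ IsCompact V ∧ x ∈ V ∧ V ⊆ U)
    (hcont : ∀ ⦃i j : ι⦄ (h : i ≤ j), Continuous (f h))
    (hid : ∀ (i : ι) (x : X i), f (le_refl i) x = x)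
    (hcomp : ∀ ⦃i j k : ι⦄ (hij : i ≤ j) (hjk : j ≤ k) (x : X k),
      f hij (f hjk x) = f (hij.trans hjk) x)
    (hqc : ∀ ⦃i j : ι⦄ (h : i ≤ j) (U : Set (X i)), IsOpen U → IsCompact U →
      IsCompact (f h ⁻¹' U))
    (hclosed : ∀ ⦃i j : ι⦄ (h : i ≤ j), IsClosedMap (f h))
    (hsurj : ∀ ⦃i j : ι⦄ (h : i ≤ j), Function.Surjective (f h))
    (i : ι) :
    topologicalKrullDim (X i) ≤
      topologicalKrullDim {u : ∀ j, X j // ∀ ⦃j k : ι⦄ (h : j ≤ k), f h (u k) = u j} := by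
  apply iSup_le
  intro p
  set T := {u : ∀ j, X j // ∀ ⦃j k : ι⦄ (h : j ≤ k), f h (u k) = u j}
  set n := p.length with hn
  choose η hη using fun k : Fin (n+1) =>
    QuasiSober.sober (p.toFun k).isIrreducible (p.toFun k).isClosed
  have hchain : ∀ k : Fin n, η k.castSucc ∈ closure {η k.succ} := by
    intro k
    rw [(hη k.succ).def]
    exact (show p.toFun k.castSucc < p.toFun k.succ from p.step k).le ((hη k.castSucc).mem)
  obtain ⟨v, hvi, hvlink⟩ :=
    lift_chain hbase hcont hid hcomp hqc hclosed hsurj i n η hchain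
  have hπ : Continuous (fun u : T => u.1 i) :=
    (continuous_apply i).comp continuous_subtype_val
  have hspec : ∀ k : Fin n, (v k.succ : T) ⤳ v k.castSucc := by
    intro k
    rw [subtype_specializes_iff, specializes_pi]
    intro j
    rw [specializes_iff_mem_closure]
    exact hvlink k j
  have hstep : ∀ k : Fin n,
      (⟨closure {v k.castSucc}, isIrreducible_singleton.closure, isClosed_closure⟩ :
        IrreducibleCloseds T) <
      ⟨closure {v k.succ}, isIrreducible_singleton.closure, isClosed_closure⟩ := by
    intro k
    apply lt_of_le_of_ne
    · show closure {v k.castSucc} ⊆ closure {v k.succ}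
      exact closure_minimal (singleton_subset_iff.mpr
        (specializes_iff_mem_closure.mp (hspec k))) isClosed_closure
    · intro heq
      have hcar : closure {(v k.succ : T)} ⊆ closure {(v k.castSucc : T)} := by
        have := congrArg (fun s : IrreducibleCloseds T => (s : Set T)) heq
        simp only [IrreducibleCloseds.coe_mk] at this
        exact this.symm.subset
      have hsp : (v k.castSucc : T) ⤳ v k.succ :=
        specializes_iff_mem_closure.mpr (hcar (subset_closure rfl))
      have hsp' : (v k.castSucc).1 i ⤳ (v k.succ).1 i := hsp.map hπ
      have : η k.succ ∈ (p.toFun k.castSucc : Set (X i)) := by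
        rw [← (hη k.castSucc).def, ← hvi k.succ, ← hvi k.castSucc]
        exact specializes_iff_mem_closure.mp hsp'
      have hle : p.toFun k.succ ≤ p.toFun k.castSucc := by
        show (p.toFun k.succ : Set (X i)) ⊆ p.toFun k.castSucc
        rw [← (hη k.succ).def]
        exact closure_minimal (singleton_subset_iff.mpr this) (p.toFun k.castSucc).isClosed
      exact absurd hle (show p.toFun k.castSucc < p.toFun k.succ from p.step k).not_ge
  let q : LTSeries (IrreducibleCloseds T) :=
    ⟨n, fun k => ⟨closure {v k}, isIrreducible_singleton.closure, isClosed_closure⟩, hstep⟩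
  exact Order.LTSeries.length_le_krullDim q


lemma dim_le [Nonempty ι]
    (hcont : ∀ ⦃i j : ι⦄ (h : i ≤ j), Continuous (f h)) :
    topologicalKrullDim {u : ∀ j, X j // ∀ ⦃j k : ι⦄ (h : j ≤ k), f h (u k) = u j} ≤
      ⨆ i, topologicalKrullDim (X i) := by
  classical
  apply iSup_le
  intro p
  set T := {u : ∀ j, X j // ∀ ⦃j k : ι⦄ (h : j ≤ k), f h (u k) = u j} with hT
  set n := p.length with hn
  have sep : ∀ k : Fin n, ∃ (m : ι) (U : Set (X m)) (x : T),
      IsOpen U ∧ x ∈ (p.toFun k.succ : Set T) ∧ x.1 m ∈ U ∧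
      ∀ w : T, w ∈ (p.toFun k.castSucc : Set T) → w.1 m ∉ U := by
    intro k
    obtain ⟨hle, x, hx1, hx2⟩ := SetLike.lt_iff_le_and_exists.mp (show p.toFun k.castSucc < p.toFun k.succ from p.step k)
    obtain ⟨C, hC, hCeq⟩ := isClosed_induced_iff.mp (p.toFun k.castSucc).isClosed
    have hxC : x.1 ∈ Cᶜ := by
      intro hmem
      apply hx2
      have hmem' : x ∈ (Subtype.val ⁻¹' C : Set T) := hmem
      rw [hCeq] at hmem'
      exact hmem'
    obtain ⟨I, u, hIu, hpi⟩ := isOpen_pi_iff.mp hC.isOpen_compl x.1 hxC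
    obtain ⟨m, hmI⟩ := I.exists_le
    refine ⟨m, ⋂ a : I, f (hmI a.1 a.2) ⁻¹' u a.1, x, ?_, hx1, ?_, ?_⟩
    · exact isOpen_iInter_of_finite fun a => (hIu a.1 a.2).1.preimage (hcont _)
    · refine mem_iInter.mpr fun a => ?_
      show f (hmI a.1 a.2) (x.1 m) ∈ u a.1
      rw [x.2 (hmI a.1 a.2)]
      exact (hIu a.1 a.2).2
    · intro w hw hwU
      have hwpi : w.1 ∈ (I : Set ι).pi u := by
        intro a ha
        have := mem_iInter.mp hwU ⟨a, ha⟩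
        rw [Set.mem_preimage, w.2 (hmI a ha)] at this
        exact this
      have hw' : w ∈ (Subtype.val ⁻¹' C : Set T) := by rw [hCeq]; exact hw
      exact (hpi hwpi) hw'
  choose m U xx hU hxmem hxU hsep using sep
  obtain ⟨istar, histar⟩ := Finset.exists_le (Finset.univ.image m)
  have him : ∀ k : Fin n, m k ≤ istar := fun k =>
    histar _ (Finset.mem_image_of_mem m (Finset.mem_univ k))
  have hπ : Continuous (fun u : T => u.1 istar) :=
    (continuous_apply istar).comp continuous_subtype_val
  have hwitness : ∀ k : Fin n,
      (xx k).1 istar ∉ closure ((fun u : T => u.1 istar) '' (p.toFun k.castSucc : Set T)) := by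
    intro k hmem
    have hWo : IsOpen (f (him k) ⁻¹' U k) := (hU k).preimage (hcont _)
    have hWx : (xx k).1 istar ∈ f (him k) ⁻¹' U k := by
      rw [Set.mem_preimage, (xx k).2 (him k)]
      exact hxU k
    obtain ⟨z, hzW, w, hw, rfl⟩ := mem_closure_iff.mp hmem _ hWo hWx
    rw [Set.mem_preimage, w.2 (him k)] at hzW
    exact hsep k w hw hzW
  have hstep : ∀ k : Fin n,
      (⟨closure ((fun u : T => u.1 istar) '' (p.toFun k.castSucc : Set T)),
        ((p.toFun k.castSucc).isIrreducible.image _ hπ.continuousOn).closure,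
        isClosed_closure⟩ : IrreducibleCloseds (X istar)) <
      ⟨closure ((fun u : T => u.1 istar) '' (p.toFun k.succ : Set T)),
        ((p.toFun k.succ).isIrreducible.image _ hπ.continuousOn).closure,
        isClosed_closure⟩ := by
    intro k
    apply lt_of_le_of_ne
    · show closure _ ⊆ closure _
      exact closure_mono (image_mono (show p.toFun k.castSucc < p.toFun k.succ from p.step k).le)
    · intro heq
      have := congrArg (fun s : IrreducibleCloseds (X istar) => (s : Set (X istar))) heq
      simp only [IrreducibleCloseds.coe_mk] at this
      apply hwitness k
      rw [this]
      exact subset_closure ⟨xx k, hxmem k, rfl⟩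
  let q : LTSeries (IrreducibleCloseds (X istar)) :=
    ⟨n, fun k => ⟨closure ((fun u : T => u.1 istar) '' (p.toFun k : Set T)),
      ((p.toFun k).isIrreducible.image _ hπ.continuousOn).closure, isClosed_closure⟩, hstep⟩
  exact le_trans (Order.LTSeries.length_le_krullDim q)
    (le_iSup (fun i => topologicalKrullDim (X i)) istar)

end

/-- Let `{Xᵢ}` be a cofiltered system of spectral spaces whose transition maps are
surjective, quasi-compact and closed, and let `X = lim Xᵢ`. Then the Krull dimension of `X`
equals the supremum of the Krull dimensions of the `Xᵢ`. -/
theorem stmt_7 {ι : Type*} [Preorder ι] [IsDirected ι (· ≤ ·)] [Nonempty ι]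
    (X : ι → Type*) [∀ i, TopologicalSpace (X i)]
    [∀ i, CompactSpace (X i)] [∀ i, QuasiSober (X i)] [∀ i, T0Space (X i)]
    [∀ i, QuasiSeparatedSpace (X i)]
    (hbase : ∀ i (x : X i) (U : Set (X i)), IsOpen U → x ∈ U →
      ∃ V : Set (X i), IsOpen V ∧ IsCompact V ∧ x ∈ V ∧ V ⊆ U)
    (f : ∀ ⦃i j : ι⦄, i ≤ j → X j → X i)
    (hcont : ∀ ⦃i j : ι⦄ (h : i ≤ j), Continuous (f h))
    (hid : ∀ (i : ι) (x : X i), f (le_refl i) x = x)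
    (hcomp : ∀ ⦃i j k : ι⦄ (hij : i ≤ j) (hjk : j ≤ k) (x : X k),
      f hij (f hjk x) = f (hij.trans hjk) x)
    (hqc : ∀ ⦃i j : ι⦄ (h : i ≤ j) (U : Set (X i)), IsOpen U → IsCompact U →
      IsCompact (f h ⁻¹' U))
    (hclosed : ∀ ⦃i j : ι⦄ (h : i ≤ j), IsClosedMap (f h))
    (hsurj : ∀ ⦃i j : ι⦄ (h : i ≤ j), Function.Surjective (f h)) :
    topologicalKrullDim {u : ∀ j, X j // ∀ ⦃j k : ι⦄ (h : j ≤ k), f h (u k) = u j} =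
      ⨆ i, topologicalKrullDim (X i) := by
  apply le_antisymm
  · exact dim_le (X := X) (f := f) hcont
  · exact iSup_le fun i => dim_ge hbase hcont hid hcomp hqc hclosed hsurj i
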